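/- For plane waves e^{ikx}, e^{iqx}, e^{irx} on ℝ³ (with k, q, r ∈ ℝ³ and kx = k₁x₁+k₂x₂+k₃x₃), the 3-ary star product evaluates to e^{ikx} ⋆^{e^{iqx}} e^{irx} = exp( ∑_{j=1}^{3} (θ_j/2)( k_j q_{σ(j)} r_{σ²(j)} − k_j q_{σ²(j)} r_{σ(j)} ) + i(k+q+r)·x ). -/

import Mathlib

noncomputable section

/-- The cyclic permutation σ of {1,2,3} (indexed by `Fin 3`): σ(k) = k+1 mod 3. -/
def sig : Fin 3 → Fin 3 := fun k => k + 1

/-- Partial derivative ∂_k of a function on ℝ³. -/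
def pd (k : Fin 3) (f : (Fin 3 → ℝ) → ℂ) : (Fin 3 → ℝ) → ℂ :=
  fun x => deriv (fun t : ℝ => f (Function.update x k t)) (x k)

/-- Iterated partial derivatives along a list of indices. -/
def pdL (l : List (Fin 3)) (f : (Fin 3 → ℝ) → ℂ) : (Fin 3 → ℝ) → ℂ := l.foldr pd f

/-- The 3-ary star product (f ⋆^g h) = m[exp(𝒫)(f⊗g⊗h)], where
𝒫 = ∑_k (iθ_k/2)(∂_k ⊗ ∂_{σ(k)} ⊗ ∂_{σ²(k)} − ∂_k ⊗ ∂_{σ²(k)} ⊗ ∂_{σ(k)}),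
written out by expanding the exponential series: the n-th order term is a sum
over all words `w` of length n in the six summands of 𝒫 (indexed by
`Fin 3 × Bool`, the Boolean recording the sign), divided by n!. -/
def star3 (θ : Fin 3 → ℝ) (f g h : (Fin 3 → ℝ) → ℂ) : (Fin 3 → ℝ) → ℂ :=
  fun x => ∑' n : ℕ, (1 / n.factorial : ℂ) *
    ∑ w : Fin n → Fin 3 × Bool,
      (∏ i, (if (w i).2 then 1 else -1) * (Complex.I * (θ (w i).1) / 2)) *
      (pdL (List.ofFn fun i => (w i).1) f x) *
      (pdL (List.ofFn fun i => if (w i).2 then sig (w i).1 else sig (sig (w i).1)) g x) *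
      (pdL (List.ofFn fun i => if (w i).2 then sig (sig (w i).1) else sig (w i).1) h x)

/-- The k-th coordinate function on ℝ³, viewed as complex valued. -/
def X (k : Fin 3) : (Fin 3 → ℝ) → ℂ := fun x => (x k : ℂ)

/-- The plane wave e^{is·x} on ℝ³. -/
def pw (s : Fin 3 → ℝ) : (Fin 3 → ℝ) → ℂ :=
  fun x => Complex.exp (Complex.I * ∑ j : Fin 3, (s j : ℂ) * (x j : ℂ))

/-- the star product of three plane waves:
e^{ikx} ⋆^{e^{iqx}} e^{irx}
  = exp(∑_j (θ_j/2)(k_j q_{σ(j)} r_{σ²(j)} − k_j q_{σ²(j)} r_{σ(j)}) + i(k+q+r)·x). -/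

lemma pd_pw (s : Fin 3 → ℝ) (j : Fin 3) :
    pd j (pw s) = fun x => Complex.I * (s j : ℂ) * pw s x := by
  funext x
  have hfun : (fun t : ℝ => pw s (Function.update x j t)) =
      fun t : ℝ => Complex.exp (Complex.I * (s j : ℂ) * (t : ℂ)
        + (Complex.I * ∑ m : Fin 3, (s m : ℂ) * (x m : ℂ)
            - Complex.I * (s j : ℂ) * (x j : ℂ))) := by
    funext t
    unfold pw
    congr 1
    fin_cases j <;>
      simp [Fin.sum_univ_three, Function.update_apply] <;> ring
  have hd : ∀ t : ℝ, HasDerivAt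
      (fun t : ℝ => Complex.exp (Complex.I * (s j : ℂ) * (t : ℂ)
        + (Complex.I * ∑ m : Fin 3, (s m : ℂ) * (x m : ℂ)
            - Complex.I * (s j : ℂ) * (x j : ℂ))))
      (Complex.I * (s j : ℂ) * Complex.exp (Complex.I * (s j : ℂ) * (t : ℂ)
        + (Complex.I * ∑ m : Fin 3, (s m : ℂ) * (x m : ℂ)
            - Complex.I * (s j : ℂ) * (x j : ℂ)))) t := by
    intro t
    have h1 : HasDerivAt (fun t : ℝ => (t : ℂ)) 1 t := Complex.ofRealCLM.hasDerivAt
    have h2 := ((h1.const_mul (Complex.I * (s j : ℂ))).add_const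
      (Complex.I * ∑ m : Fin 3, (s m : ℂ) * (x m : ℂ)
        - Complex.I * (s j : ℂ) * (x j : ℂ)))
    have h3 := h2.cexp
    simpa [mul_comm] using h3
  unfold pd
  rw [hfun, (hd (x j)).deriv]
  unfold pw
  congr 1
  ring

lemma pdL_pw (s : Fin 3 → ℝ) (l : List (Fin 3)) :
    pdL l (pw s) = fun x => (l.map fun j => Complex.I * (s j : ℂ)).prod * pw s x := by
  induction l with
  | nil => simp [pdL]
  | cons j l ih =>
    have : pdL (j :: l) (pw s) = pd j (pdL l (pw s)) := rfl
    rw [this, ih]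
    funext x
    unfold pd
    rw [show (fun t : ℝ => (List.map (fun j => Complex.I * (s j : ℂ)) l).prod
        * pw s (Function.update x j t))
      = fun t : ℝ => (List.map (fun j => Complex.I * (s j : ℂ)) l).prod
        * ((fun t => pw s (Function.update x j t)) t) from rfl]
    rw [deriv_const_mul_field]
    have := congrFun (pd_pw s j) x
    unfold pd at this
    rw [this]
    simp
    ring

theorem star3_plane_waves (θ : Fin 3 → ℝ) (k q r : Fin 3 → ℝ) :
    ∀ x, star3 θ (pw k) (pw q) (pw r) x =
      Complex.exp
        ((∑ j : Fin 3, ((θ j : ℂ) / 2) *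
            ((k j : ℂ) * (q (sig j) : ℂ) * (r (sig (sig j)) : ℂ)
              - (k j : ℂ) * (q (sig (sig j)) : ℂ) * (r (sig j) : ℂ)))
          + Complex.I * ∑ j : Fin 3, ((k j : ℂ) + (q j : ℂ) + (r j : ℂ)) * (x j : ℂ)) := by
  intro x
  set S : ℂ := ∑ j : Fin 3, ((θ j : ℂ) / 2) *
      ((k j : ℂ) * (q (sig j) : ℂ) * (r (sig (sig j)) : ℂ)
        - (k j : ℂ) * (q (sig (sig j)) : ℂ) * (r (sig j) : ℂ)) with hS
  -- the per-letter coefficient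
  set c : Fin 3 × Bool → ℂ := fun a =>
    ((if a.2 then 1 else -1) * (Complex.I * (θ a.1 : ℂ) / 2))
      * (Complex.I * (k a.1 : ℂ))
      * (Complex.I * (q (if a.2 then sig a.1 else sig (sig a.1)) : ℂ))
      * (Complex.I * (r (if a.2 then sig (sig a.1) else sig a.1) : ℂ)) with hc
  have hsum_c : ∑ a : Fin 3 × Bool, c a = S := by
    rw [Fintype.sum_prod_type, hS]
    refine Finset.sum_congr rfl fun j _ => ?_
    rw [Fintype.sum_bool]
    simp only [hc]
    norm_num
    have h4 : Complex.I ^ 4 = 1 := by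
      rw [show (4 : ℕ) = 2 * 2 from rfl, pow_mul, Complex.I_sq]
      norm_num
    ring_nf
    rw [h4]
    ring
  have key : star3 θ (pw k) (pw q) (pw r) x
      = ∑' n : ℕ, S ^ n / n.factorial * (pw k x * pw q x * pw r x) := by
    unfold star3
    congr 1
    funext n
    have hterm : ∀ w : Fin n → Fin 3 × Bool,
        (∏ i, (if (w i).2 then 1 else -1) * (Complex.I * (θ (w i).1) / 2)) *
        (pdL (List.ofFn fun i => (w i).1) (pw k) x) *
        (pdL (List.ofFn fun i => if (w i).2 then sig (w i).1 else sig (sig (w i).1)) (pw q) x) *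
        (pdL (List.ofFn fun i => if (w i).2 then sig (sig (w i).1) else sig (w i).1) (pw r) x)
        = (∏ i, c (w i)) * (pw k x * pw q x * pw r x) := by
      intro w
      rw [pdL_pw, pdL_pw, pdL_pw]
      simp only [List.map_ofFn]
      rw [List.prod_ofFn, List.prod_ofFn, List.prod_ofFn]
      simp only [hc, Function.comp]
      simp only [Finset.prod_mul_distrib]
      ring
    rw [Finset.sum_congr rfl fun w _ => hterm w, ← Finset.sum_mul, ← hsum_c]
    have hpow : (∑ a : Fin 3 × Bool, c a) ^ n = ∑ w : Fin n → Fin 3 × Bool, ∏ i, c (w i) := by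
      calc (∑ a : Fin 3 × Bool, c a) ^ n = ∏ _i : Fin n, ∑ a : Fin 3 × Bool, c a := by
            rw [Finset.prod_const, Finset.card_univ, Fintype.card_fin]
        _ = _ := by
            rw [Finset.prod_univ_sum (fun _ => Finset.univ) (fun _ a => c a)]
            rw [Fintype.piFinset_univ]
    rw [hpow]
    ring
  rw [key, tsum_mul_right]
  have hexp : (∑' n : ℕ, S ^ n / n.factorial) = Complex.exp S := by
    rw [Complex.exp_eq_exp_ℂ, NormedSpace.exp_eq_tsum_div]
  rw [hexp]
  unfold pw
  rw [← Complex.exp_add, ← Complex.exp_add, ← Complex.exp_add]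
  congr 1
  rw [Finset.mul_sum, Finset.mul_sum, Finset.mul_sum, Finset.mul_sum, ← Finset.sum_add_distrib,
    ← Finset.sum_add_distrib]
  congr 1
  exact Finset.sum_congr rfl fun j _ => by ring
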